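/- Assume (A1)–(A4) with γ > 2 in (A2), that the environment is doubly stochastic (Π-a.s. Σ_x p_{xy}(ω) = 1 for all y), and that Π-a.s. Σ_{y∈ℤ^d} p_{0y}(ω) y = 0. Let C := ∫_Ω Σ_{y∈ℤ^d} p_{0y}(ω) (y ⊗ y) Π(dω). Then C is positive definite in the directions spanned by Γ: for every v ∈ ℝ^d, if ⟨v, Cv⟩ = 0 then ⟨y, v⟩ = 0 for all y ∈ Γ. -/

import Mathlib

open MeasureTheory Filter Topology
open scoped ENNReal NNReal Classical

noncomputable section

/-- Points of the lattice `ℤ^d`. -/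
abbrev Zd (d : ℕ) := Fin d → ℤ

/-- The natural embedding of `ℤ^d` into `ℝ^d`. -/
def zdR {d : ℕ} (y : Zd d) : Fin d → ℝ := fun i => (y i : ℝ)

/-- A random environment on `ℤ^d`: a complete probability space `(Ω, Pi)`, a group
`(tau z)` of invertible measure-preserving maps indexed by `ℤ^d`, and measurable
transition probabilities `p x y : Ω → [0,1]` with total mass one and the covariance
property `p x y (tau z ω) = p (x+z) (y+z) ω`. -/
structure RandomEnv (d : ℕ) (Ω : Type*) [MeasurableSpace Ω] where
  Pi : Measure Ω
  tau : Zd d → Ω → Ω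
  p : Zd d → Zd d → Ω → ℝ
  prob : IsProbabilityMeasure Pi
  complete : Pi.IsComplete
  tau_meas : ∀ z, Measurable (tau z)
  tau_mp : ∀ z, MeasurePreserving (tau z) Pi Pi
  tau_add : ∀ z w, tau z ∘ tau w = tau (z + w)
  tau_zero : tau 0 = id
  p_meas : ∀ x y, Measurable (p x y)
  p_nonneg : ∀ x y ω, 0 ≤ p x y ω
  p_le_one : ∀ x y ω, p x y ω ≤ 1
  p_sum : ∀ x ω, HasSum (fun y => p x y ω) 1
  p_cov : ∀ x y z ω, p x y (tau z ω) = p (x + z) (y + z) ω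

variable {d : ℕ} {Ω : Type*} [MeasurableSpace Ω]

/-- The EVP (environment viewed from the particle) transition kernel
`K(ω, B) = ∑_y p_{0y}(ω) 1_B (τ_y ω)`. -/
def Kker (E : RandomEnv d Ω) (ω : Ω) (B : Set Ω) : ℝ≥0∞ :=
  ∑' y : Zd d, if E.tau y ω ∈ B then ENNReal.ofReal (E.p 0 y ω) else 0

/-- A probability measure `ν` is a steady state for the EVP kernel. -/
def IsSteady (E : RandomEnv d Ω) (ν : Measure Ω) : Prop :=
  IsProbabilityMeasure ν ∧ ∀ B : Set Ω, MeasurableSet B → ν B = ∫⁻ ω, Kker E ω B ∂ν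

/-- The `n`-step transition probabilities `p^{(n)}_{xy}(ω)`. -/
def nstep (E : RandomEnv d Ω) : ℕ → Zd d → Zd d → Ω → ℝ
  | 0, x, y, _ => if x = y then 1 else 0
  | n + 1, x, y, ω => ∑' z : Zd d, E.p x z ω * nstep E n z y ω

/-- The set `Ω_t` of transitive environments (relative to a subgroup `Γ`). -/
def transSet (E : RandomEnv d Ω) (Γ : AddSubgroup (Zd d)) : Set Ω :=
  {ω | ∀ y ∈ Γ, ∃ n : ℕ, 1 ≤ n ∧ 0 < nstep E n 0 y ω}

/-- The set `Ω_det` of environments with a deterministic jump at the origin. -/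
def detSet (E : RandomEnv d Ω) : Set Ω :=
  {ω | ∃ y₀ : Zd d, ∀ y, E.p 0 y ω = if y = y₀ then 1 else 0}

/-- `P : Ω → Measure (ℕ → ℤ^d)` is the family of quenched laws `P_ω` of the random
walk in the environment `ω`, started at the origin. -/
def IsQuenchedLaw (E : RandomEnv d Ω) (P : Ω → Measure (ℕ → Zd d)) : Prop :=
  (∀ ω, IsProbabilityMeasure (P ω)) ∧
  (∀ B : Set (ℕ → Zd d), MeasurableSet B → Measurable fun ω => P ω B) ∧
  ∀ ω, ∀ n : ℕ, ∀ w : ℕ → Zd d,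
    P ω {x | ∀ k ≤ n, x k = w k}
      = ENNReal.ofReal
          ((if w 0 = 0 then (1 : ℝ) else 0) * ∏ k ∈ Finset.range n, E.p (w k) (w (k + 1)) ω)

/-- `PP` is the annealed law on `(ℤ^d)^ℕ × Ω` with environment marginal `ν`:
`PP (A × B) = ∫_B P_ω(A) ν(dω)`. -/
def IsAnnealedLaw (P : Ω → Measure (ℕ → Zd d)) (ν : Measure Ω)
    (PP : Measure ((ℕ → Zd d) × Ω)) : Prop :=
  ∀ A : Set (ℕ → Zd d), MeasurableSet A → ∀ B : Set Ω, MeasurableSet B →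
    PP (A ×ˢ B) = ∫⁻ ω in B, P ω A ∂ν

/-- Assumption (A1): no deterministic walks, a.s. w.r.t. the annealed law. -/
def A1cond (E : RandomEnv d Ω) (PP : Measure ((ℕ → Zd d) × Ω)) : Prop :=
  ∀ᵐ z ∂PP, ∃ n : ℕ, E.tau (z.1 n) z.2 ∉ detSet E

/-- Assumption (A2), with decay exponent `d + γ`. -/
def A2cond (E : RandomEnv d Ω) (γ : ℝ) : Prop :=
  ∃ K : ℝ, 0 < K ∧ ∀ᵐ ω ∂E.Pi, ∀ x y : Zd d, x ≠ y →
    E.p x y ω ≤ K * ‖y - x‖ ^ (-((d : ℝ) + γ))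

/-- Assumption (A3): ergodicity of the environment w.r.t. the translations in `Γ`. -/
def A3cond (E : RandomEnv d Ω) (Γ : AddSubgroup (Zd d)) : Prop :=
  ∀ B : Set Ω, MeasurableSet B → (∀ z ∈ Γ, E.tau z ⁻¹' B = B) →
    E.Pi B = 0 ∨ E.Pi B = 1

/-- Assumption (A4): partial transitivity. -/
def A4cond (E : RandomEnv d Ω) (Γ : AddSubgroup (Zd d)) : Prop :=
  0 < E.Pi (transSet E Γ)

/-- Assumption (A5): existence of an absolutely continuous steady state charging
the transitive environments. -/
def A5cond (E : RandomEnv d Ω) (Γ : AddSubgroup (Zd d)) (π' : Measure Ω) : Prop :=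
  π'.AbsolutelyContinuous E.Pi ∧ IsSteady E π' ∧ 0 < π' (transSet E Γ)

/-! ### The PVP dynamical system -/

/-- Partial sums `a_n(ω)` of the jump probabilities `q_i(ω) = p_{0 d_i}(ω)`,
relative to an enumeration `e` of `ℤ^d`. -/
def aFun (E : RandomEnv d Ω) (e : ℕ ≃ Zd d) (n : ℕ) (ω : Ω) : ℝ :=
  ∑ i ∈ Finset.range n, E.p 0 (e i) ω

/-- The index `i(s,ω)` of the interval `I_i(ω) = [a_i(ω), a_{i+1}(ω))` containing `s`. -/
def idx (E : RandomEnv d Ω) (e : ℕ ≃ Zd d) (s : ℝ) (ω : Ω) : ℕ :=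
  sInf {i : ℕ | s < aFun E e (i + 1) ω}

/-- The displacement function `D(s,ω) = d_{i(s,ω)}`. -/
def Dfun (E : RandomEnv d Ω) (e : ℕ ≃ Zd d) (sω : ℝ × Ω) : Zd d :=
  e (idx E e sω.1 sω.2)

/-- The PVP map `T(s,ω) = (φ(s,ω), τ_{D(s,ω)} ω)` on `Σ = I × Ω`. -/
def Tmap (E : RandomEnv d Ω) (e : ℕ ≃ Zd d) : ℝ × Ω → ℝ × Ω :=
  fun sω =>
    ((sω.1 - aFun E e (idx E e sω.1 sω.2) sω.2) / E.p 0 (Dfun E e sω) sω.2,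
      E.tau (Dfun E e sω) sω.2)

/-- The measure `m ⊗ ν` on `Σ = [0,1) × Ω` (with `m` Lebesgue measure on `[0,1)`). -/
def pvpMeasure (ν : Measure Ω) : Measure (ℝ × Ω) :=
  (volume.restrict (Set.Ico (0 : ℝ) 1)).prod ν

/-- The random walk `X_n(s,ω) = ∑_{k<n} D(T^k(s,ω))` read off from the PVP system. -/
def Xwalk (E : RandomEnv d Ω) (e : ℕ ≃ Zd d) (n : ℕ) (sω : ℝ × Ω) : Zd d :=
  ∑ k ∈ Finset.range n, Dfun E e ((Tmap E e)^[k] sω)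

/-- The point-of-view-of-the-particle map `F` on `(ℤ^d)^ℕ × Ω`. -/
def Fmap (E : RandomEnv d Ω) : (ℕ → Zd d) × Ω → (ℕ → Zd d) × Ω :=
  fun z => (fun n => z.1 (n + 1) - z.1 1, E.tau (z.1 1) z.2)

/-- `Q` is the law on `Ω^ℕ` of the stationary EVP Markov chain with kernel `K`
and initial distribution `ν`. -/
def IsEVPLaw (E : RandomEnv d Ω) (ν : Measure Ω) (Q : Measure (ℕ → Ω)) : Prop :=
  IsProbabilityMeasure Q ∧
  Measure.map (fun f : ℕ → Ω => f 0) Q = ν ∧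
  ∀ n : ℕ, ∀ A' : Set (Fin (n + 1) → Ω), MeasurableSet A' →
    ∀ C : Set Ω, MeasurableSet C →
      Q ({f | (fun k : Fin (n + 1) => f k.val) ∈ A'} ∩ {f | f (n + 1) ∈ C})
        = ∫⁻ f in {f | (fun k : Fin (n + 1) => f k.val) ∈ A'}, Kker E (f n) C ∂Q

/-- The local drift `δ(ω) = ∑_y p_{0y}(ω) y`, viewed in `ℝ^d`. -/
def localDrift (E : RandomEnv d Ω) (ω : Ω) : Fin d → ℝ :=
  ∑' y : Zd d, E.p 0 y ω • zdR y

/-- A doubly stochastic environment: `Π`-a.s., `∑_x p_{xy}(ω) = 1` for every `y`. -/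
def DoublyStochastic (E : RandomEnv d Ω) : Prop :=
  ∀ᵐ ω ∂E.Pi, ∀ y : Zd d, HasSum (fun x => E.p x y ω) 1

/-- The covariance matrix `C = ∫_Ω ∑_y p_{0y}(ω) (y ⊗ y) Π(dω)`. -/
def covMatrix (E : RandomEnv d Ω) : Matrix (Fin d) (Fin d) ℝ :=
  fun i j => ∫ ω, (∑' y : Zd d, E.p 0 y ω * (zdR y i * zdR y j)) ∂E.Pi


/-- The conjugacy `Φ(s,ω) = ((X_n(s,ω))_n, ω)` between the PVP system and the
annealed process. -/
def PhiMap (E : RandomEnv d Ω) (e : ℕ ≃ Zd d) : ℝ × Ω → (ℕ → Zd d) × Ω :=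
  fun sω => (fun n => Xwalk E e n sω, sω.2)

end

/-! ### Auxiliary lemmas -/

section Aux

lemma summable_one_add_abs {t : ℝ} (ht : 1 < t) :
    Summable (fun n : ℤ => (1 + |(n : ℝ)|) ^ (-t)) := by
  have hnat : Summable (fun n : ℕ => (1 + |((n : ℤ) : ℝ)|) ^ (-t)) := by
    have h0 : Summable (fun n : ℕ => ((n : ℝ)) ^ (-t)) :=
      (Real.summable_nat_rpow).2 (by linarith)
    have h1 : Summable (fun n : ℕ => (((n + 1 : ℕ) : ℝ)) ^ (-t)) :=
      ((summable_nat_add_iff 1).2 h0)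
    refine h1.congr fun n => ?_
    push_cast
    rw [abs_of_nonneg (by positivity)]
    ring_nf
  refine Summable.of_nat_of_neg hnat (hnat.congr fun n => ?_)
  push_cast
  rw [abs_neg]

lemma summable_pi_prod {d : ℕ} {f : ℤ → ℝ} (hf : Summable f) (h0 : ∀ n, 0 ≤ f n) :
    Summable (fun y : Zd d => ∏ i, f (y i)) := by
  induction d with
  | zero =>
      haveI : Finite (Zd 0) := Finite.of_subsingleton
      exact Summable.of_finite
  | succ n ih =>
      have hmul : Summable (fun p : ℤ × (Fin n → ℤ) => f p.1 * ∏ i, f (p.2 i)) :=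
        Summable.mul_of_nonneg (g := fun y : Fin n → ℤ => ∏ i, f (y i)) hf ih
          (fun m => h0 m) (fun y => Finset.prod_nonneg fun i _ => h0 _)
      have := (Fin.consEquiv fun _ : Fin (n + 1) => ℤ).symm.summable_iff.2 hmul
      refine this.congr fun y => ?_
      simp [Fin.consEquiv, Fin.prod_univ_succ, Function.comp, Fin.tail]

lemma Zd.one_le_norm {d : ℕ} {y : Zd d} (hy : y ≠ 0) : 1 ≤ ‖y‖ := by
  obtain ⟨i, hi⟩ := Function.ne_iff.1 hy
  have h1 : (1:ℝ) ≤ ‖y i‖ := by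
    rw [Int.norm_eq_abs]
    exact_mod_cast Int.one_le_abs hi
  exact h1.trans (norm_le_pi_norm y i)

lemma Zd.abs_coord_le {d : ℕ} (y : Zd d) (i : Fin d) : |((y i : ℤ) : ℝ)| ≤ ‖y‖ := by
  have := norm_le_pi_norm y i
  rwa [Int.norm_eq_abs] at this

lemma norm_rpow_le_prod {d : ℕ} (hd : 1 ≤ d) {s : ℝ} (hs : 0 < s) (y : Zd d) (hy : y ≠ 0) :
    ‖y‖ ^ (-s) ≤ 2 ^ s * ∏ i, (1 + |((y i : ℤ) : ℝ)|) ^ (-(s / d)) := by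
  have hy1 : (1:ℝ) ≤ ‖y‖ := Zd.one_le_norm hy
  have hypos : (0:ℝ) < ‖y‖ := by linarith
  have hd0 : (0:ℝ) < d := by exact_mod_cast hd
  have ht : 0 < s / d := div_pos hs hd0
  have hP : ∏ i, (1 + |((y i : ℤ):ℝ)|) ≤ (2 * ‖y‖) ^ d := by
    calc ∏ i, (1 + |((y i : ℤ):ℝ)|) ≤ ∏ _i : Fin d, (2 * ‖y‖) := by
          apply Finset.prod_le_prod
          · intro i _; positivity
          · intro i _; have := Zd.abs_coord_le y i; linarith
      _ = (2 * ‖y‖) ^ d := by simp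
  have hPpos : 0 < ∏ i, (1 + |((y i : ℤ):ℝ)|) :=
    Finset.prod_pos fun i _ => by positivity
  have hanti : ((2 * ‖y‖) ^ d : ℝ) ^ (-(s / d)) ≤ (∏ i, (1 + |((y i : ℤ):ℝ)|)) ^ (-(s / d)) :=
    Real.rpow_le_rpow_of_nonpos hPpos hP (by linarith)
  have hpow : ((2 * ‖y‖) ^ d : ℝ) ^ (-(s / d)) = (2 * ‖y‖) ^ (-s) := by
    rw [← Real.rpow_natCast (2 * ‖y‖) d, ← Real.rpow_mul (by positivity)]
    congr 1
    field_simp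
  have hmul : (2 : ℝ) ^ s * (2 * ‖y‖) ^ (-s) = ‖y‖ ^ (-s) := by
    rw [Real.mul_rpow (by norm_num) (by positivity), ← mul_assoc,
      ← Real.rpow_add (by norm_num : (0:ℝ) < 2)]
    simp
  calc ‖y‖ ^ (-s) = 2 ^ s * (2 * ‖y‖) ^ (-s) := hmul.symm
    _ ≤ 2 ^ s * ((2 * ‖y‖) ^ d : ℝ) ^ (-(s / d)) := by
        rw [hpow]
    _ ≤ 2 ^ s * (∏ i, (1 + |((y i : ℤ):ℝ)|)) ^ (-(s / d)) := by
        apply mul_le_mul_of_nonneg_left hanti (by positivity)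
    _ = 2 ^ s * ∏ i, (1 + |((y i : ℤ):ℝ)|) ^ (-(s / d)) := by
        rw [Real.finset_prod_rpow _ _ (fun i _ => by positivity)]

lemma summable_norm_rpow {d : ℕ} (hd : 1 ≤ d) {s : ℝ} (hs : (d : ℝ) < s) :
    Summable (fun y : Zd d => if y = (0 : Zd d) then 0 else ‖y‖ ^ (-s)) := by
  have hd0 : (0:ℝ) < d := by exact_mod_cast hd
  have hs0 : 0 < s := lt_of_le_of_lt hd0.le hs
  have ht : 1 < s / d := (one_lt_div hd0).2 hs
  have h1 : Summable (fun n : ℤ => (1 + |(n : ℝ)|) ^ (-(s / d))) := summable_one_add_abs ht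
  have h2 : Summable (fun y : Zd d => ∏ i, (1 + |((y i : ℤ) : ℝ)|) ^ (-(s / d))) :=
    summable_pi_prod (f := fun n : ℤ => (1 + |(n : ℝ)|) ^ (-(s / d))) h1
      (fun n => by positivity)
  refine (h2.mul_left (2 ^ s)).of_nonneg_of_le (fun y => ?_) (fun y => ?_)
  · by_cases h : y = 0 <;> simp [h] <;> positivity
  · by_cases h : y = 0
    · simp only [h, if_true]
      positivity
    · simp only [h, if_false]
      exact norm_rpow_le_prod hd hs0 y h

variable {d : ℕ} {Ω : Type*} [MeasurableSpace Ω]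

lemma nstep_nonneg (E : RandomEnv d Ω) :
    ∀ (n : ℕ) (x y : Zd d) (ω : Ω), 0 ≤ nstep E n x y ω := by
  intro n
  induction n with
  | zero =>
      intro x y ω
      simp only [nstep]
      split <;> norm_num
  | succ n ih =>
      intro x y ω
      exact tsum_nonneg fun z => mul_nonneg (E.p_nonneg _ _ _) (ih _ _ _)

lemma nstep_orth {E : RandomEnv d Ω} {ω : Ω} {v : Fin d → ℝ}
    (h : ∀ x w : Zd d, 0 < E.p x w ω →
      (∑ i, zdR w i * v i) = (∑ i, zdR x i * v i)) :
    ∀ (n : ℕ) (x y : Zd d), 0 < nstep E n x y ω →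
      (∑ i, zdR y i * v i) = (∑ i, zdR x i * v i) := by
  intro n
  induction n with
  | zero =>
      intro x y h0
      by_cases hxy : x = y
      · rw [hxy]
      · simp [nstep, hxy] at h0
  | succ n ih =>
      intro x y h0
      have hex : ∃ z, 0 < E.p x z ω * nstep E n z y ω := by
        by_contra hco
        push_neg at hco
        have hz : ∀ z : Zd d, E.p x z ω * nstep E n z y ω = 0 := fun z =>
          le_antisymm (hco z) (mul_nonneg (E.p_nonneg _ _ _) (nstep_nonneg E n z y ω))
        have hzero : nstep E (n + 1) x y ω = 0 := by
          simp only [nstep]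
          simp [hz]
        rw [hzero] at h0
        exact lt_irrefl _ h0
      obtain ⟨z, hz⟩ := hex
      have hp : 0 < E.p x z ω := by
        rcases (E.p_nonneg x z ω).lt_or_eq with h' | h'
        · exact h'
        · exfalso; rw [← h'] at hz; simp at hz
      have hn : 0 < nstep E n z y ω := by
        rcases (nstep_nonneg E n z y ω).lt_or_eq with h' | h'
        · exact h'
        · exfalso; rw [← h'] at hz; simp at hz
      rw [ih z y hn, h x z hp]

end Aux

/-- Under (A1)-(A4) with `γ > 2`, double stochasticity and zero local
drift, the diffusion matrix `C` is positive definite in the directions spanned by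
`Γ`: if `⟨v, Cv⟩ = 0` then `v` is orthogonal to every `y ∈ Γ`. -/
theorem diffusion_matrix_positive_definite_on_Gamma
    {d : ℕ} (hd : 1 ≤ d) {Ω : Type*} [MeasurableSpace Ω] (E : RandomEnv d Ω)
    (Γ : AddSubgroup (Zd d))
    (P : Ω → Measure (ℕ → Zd d)) (hP : IsQuenchedLaw E P)
    (PP : Measure ((ℕ → Zd d) × Ω)) (hPP : IsAnnealedLaw P E.Pi PP)
    (hA1 : A1cond E PP) (hA2 : ∃ γ > (2 : ℝ), A2cond E γ)
    (hA3 : A3cond E Γ) (hA4 : A4cond E Γ)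
    (hds : DoublyStochastic E)
    (hdrift : ∀ᵐ ω ∂E.Pi, HasSum (fun y : Zd d => E.p 0 y ω • zdR y) 0) :
    ∀ v : Fin d → ℝ,
      (∑ i, ∑ j, v i * covMatrix E i j * v j) = 0 →
      ∀ y : Zd d, y ∈ Γ → (∑ i, zdR y i * v i) = 0 := by
  classical
  intro v hv y0 hy0
  haveI : IsProbabilityMeasure E.Pi := E.prob
  obtain ⟨γ, hγ, K, hK, hA2ae⟩ := hA2
  set c : Zd d → ℝ := fun y => ∑ i, zdR y i * v i with hcdef
  have hd0 : (0:ℝ) < d := by exact_mod_cast hd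
  set s : ℝ := (d : ℝ) + γ - 2 with hsdef
  have hds' : (d : ℝ) < s := by rw [hsdef]; linarith
  have hs0 : (0:ℝ) < s := lt_trans hd0 hds'
  set B : Zd d → ℝ := fun y => K * (if y = 0 then 0 else ‖y‖ ^ (-s)) with hBdef
  have hBsum : Summable B := (summable_norm_rpow hd hds').mul_left K
  have hBnn : ∀ y, 0 ≤ B y := by
    intro y
    simp only [hBdef]
    by_cases h : y = 0 <;> simp [h] <;> positivity
  -- the pointwise bound coming from (A2)
  have key : ∀ ω, (∀ x z : Zd d, x ≠ z → E.p x z ω ≤ K * ‖z - x‖ ^ (-((d:ℝ) + γ))) →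
      ∀ (a : Zd d → ℝ), (∀ y, y ≠ 0 → |a y| ≤ ‖y‖ * ‖y‖) → (a 0 = 0) →
      ∀ y, |E.p 0 y ω * a y| ≤ B y := by
    intro ω hω a ha h0 y
    by_cases hy : y = 0
    · rw [hy, h0]
      simpa using hBnn 0
    · have hy1 : (1:ℝ) ≤ ‖y‖ := Zd.one_le_norm hy
      have hyp : (0:ℝ) < ‖y‖ := by linarith
      have hp : E.p 0 y ω ≤ K * ‖y‖ ^ (-((d:ℝ) + γ)) := by
        have := hω 0 y (fun h => hy h.symm)
        simpa using this
      have habs : |E.p 0 y ω * a y| = E.p 0 y ω * |a y| := by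
        rw [abs_mul, abs_of_nonneg (E.p_nonneg 0 y ω)]
      rw [habs]
      have hle : E.p 0 y ω * |a y| ≤ (K * ‖y‖ ^ (-((d:ℝ) + γ))) * (‖y‖ * ‖y‖) :=
        mul_le_mul hp (ha y hy) (abs_nonneg _) (by positivity)
      have heq : (K * ‖y‖ ^ (-((d:ℝ) + γ))) * (‖y‖ * ‖y‖) = B y := by
        have h2 : ‖y‖ * ‖y‖ = ‖y‖ ^ (((2:ℕ)) : ℝ) := by
          rw [Real.rpow_natCast]; ring
        simp only [hBdef, if_neg hy]
        rw [h2, mul_assoc, ← Real.rpow_add hyp]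
        congr 1
        rw [hsdef]
        push_cast
        ring
      rw [heq] at hle
      exact hle
  have hcoords : ∀ (i j : Fin d) (y : Zd d), y ≠ 0 → |zdR y i * zdR y j| ≤ ‖y‖ * ‖y‖ := by
    intro i j y _
    rw [abs_mul]
    exact mul_le_mul (Zd.abs_coord_le y i) (Zd.abs_coord_le y j) (abs_nonneg _) (norm_nonneg _)
  have hzdR0 : ∀ i : Fin d, zdR (0 : Zd d) i = 0 := by intro i; simp [zdR]
  have hmax_abs : ∀ r : ℝ, |max r 0| ≤ |r| := by
    intro r
    rw [abs_of_nonneg (le_max_right r 0)]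
    exact max_le (le_abs_self r) (abs_nonneg r)
  have hsum_gen : ∀ ω, (∀ x z : Zd d, x ≠ z → E.p x z ω ≤ K * ‖z - x‖ ^ (-((d:ℝ) + γ))) →
      ∀ (a : Zd d → ℝ), (∀ y, y ≠ 0 → |a y| ≤ ‖y‖ * ‖y‖) → (a 0 = 0) →
      Summable (fun y => E.p 0 y ω * a y) := by
    intro ω hω a ha h0
    apply Summable.of_abs
    exact hBsum.of_nonneg_of_le (fun y => abs_nonneg _) (fun y => key ω hω a ha h0 y)
  have hsum_ij : ∀ ω, (∀ x z : Zd d, x ≠ z → E.p x z ω ≤ K * ‖z - x‖ ^ (-((d:ℝ) + γ))) →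
      ∀ i j : Fin d, Summable (fun y => E.p 0 y ω * (zdR y i * zdR y j)) := by
    intro ω hω i j
    exact hsum_gen ω hω _ (fun y hy => hcoords i j y hy) (by simp [hzdR0])
  -- measurable building blocks
  set F : Fin d → Fin d → Ω → ℝ := fun i j ω => ∑' y, E.p 0 y ω * (zdR y i * zdR y j)
    with hFdef
  set G : (Zd d → ℝ) → Ω → ℝ :=
    fun a ω => (∑' y, ENNReal.ofReal (E.p 0 y ω * a y)).toReal with hGdef
  have hGmeas : ∀ a, Measurable (G a) := by
    intro a
    apply Measurable.ennreal_toReal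
    exact Measurable.ennreal_tsum fun y => ((E.p_meas 0 y).mul_const (a y)).ennreal_ofReal
  have hGeq : ∀ (a : Zd d → ℝ), (∀ y, 0 ≤ a y) → ∀ ω,
      Summable (fun y => E.p 0 y ω * a y) → G a ω = ∑' y, E.p 0 y ω * a y := by
    intro a ha ω hsum
    have hnn : ∀ y, 0 ≤ E.p 0 y ω * a y := fun y => mul_nonneg (E.p_nonneg _ _ _) (ha y)
    simp only [hGdef]
    rw [← ENNReal.ofReal_tsum_of_nonneg hnn hsum, ENNReal.toReal_ofReal (tsum_nonneg hnn)]
  -- pos/neg part bounds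
  have hposbd : ∀ (i j : Fin d) (r : ℝ) (y : Zd d), y ≠ 0 →
      |max (r * (zdR y i * zdR y j)) 0| ≤ ‖y‖ * ‖y‖ → True := fun _ _ _ _ _ _ => trivial
  have hsum_part : ∀ ω, (∀ x z : Zd d, x ≠ z → E.p x z ω ≤ K * ‖z - x‖ ^ (-((d:ℝ) + γ))) →
      ∀ i j : Fin d, ∀ sgn : Bool,
      Summable (fun y => E.p 0 y ω *
        max (if sgn then zdR y i * zdR y j else -(zdR y i * zdR y j)) 0) := by
    intro ω hω i j sgn
    refine hsum_gen ω hω _ (fun y hy => ?_) (by cases sgn <;> simp [hzdR0])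
    calc |max (if sgn then zdR y i * zdR y j else -(zdR y i * zdR y j)) 0|
        ≤ |if sgn then zdR y i * zdR y j else -(zdR y i * zdR y j)| := hmax_abs _
      _ = |zdR y i * zdR y j| := by cases sgn <;> simp
      _ ≤ ‖y‖ * ‖y‖ := hcoords i j y hy
  -- F is a.e. the difference of two measurable functions
  have hFae : ∀ i j : Fin d, F i j =ᵐ[E.Pi] fun ω =>
      G (fun y => max (zdR y i * zdR y j) 0) ω -
      G (fun y => max (-(zdR y i * zdR y j)) 0) ω := by
    intro i j
    filter_upwards [hA2ae] with ω hω
    have h1 : Summable (fun y => E.p 0 y ω * max (zdR y i * zdR y j) 0) := by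
      simpa using hsum_part ω hω i j true
    have h2 : Summable (fun y => E.p 0 y ω * max (-(zdR y i * zdR y j)) 0) := by
      simpa using hsum_part ω hω i j false
    have hsplit : (fun y => E.p 0 y ω * (zdR y i * zdR y j)) = fun y =>
        E.p 0 y ω * max (zdR y i * zdR y j) 0 -
        E.p 0 y ω * max (-(zdR y i * zdR y j)) 0 := by
      funext y
      rw [← mul_sub, max_zero_sub_max_neg_zero_eq_self]
    calc F i j ω
        = ∑' y, (E.p 0 y ω * max (zdR y i * zdR y j) 0 -
            E.p 0 y ω * max (-(zdR y i * zdR y j)) 0) := by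
          simp only [hFdef]
          rw [hsplit]
      _ = (∑' y, E.p 0 y ω * max (zdR y i * zdR y j) 0) -
            ∑' y, E.p 0 y ω * max (-(zdR y i * zdR y j)) 0 := h1.tsum_sub h2
      _ = G (fun y => max (zdR y i * zdR y j) 0) ω -
            G (fun y => max (-(zdR y i * zdR y j)) 0) ω := by
          rw [hGeq _ (fun y => le_max_right _ _) ω h1, hGeq _ (fun y => le_max_right _ _) ω h2]
  -- integrability of F
  have hFint : ∀ i j : Fin d, Integrable (F i j) E.Pi := by
    intro i j
    have haes : AEStronglyMeasurable (F i j) E.Pi :=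
      (((hGmeas _).sub (hGmeas _)).stronglyMeasurable.aestronglyMeasurable).congr (hFae i j).symm
    refine Integrable.mono' (integrable_const (∑' y, B y)) haes ?_
    filter_upwards [hA2ae] with ω hω
    have hsum := hsum_ij ω hω i j
    have hbd : ∀ y, |E.p 0 y ω * (zdR y i * zdR y j)| ≤ B y := fun y =>
      key ω hω _ (fun y hy => hcoords i j y hy) (by simp [hzdR0]) y
    calc ‖F i j ω‖ ≤ ∑' y, ‖E.p 0 y ω * (zdR y i * zdR y j)‖ := by
          simp only [hFdef]
          exact norm_tsum_le_tsum_norm (by simpa only [Real.norm_eq_abs] using hsum.abs)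
      _ ≤ ∑' y, B y := by
          refine Summable.tsum_le_tsum (fun y => ?_) (by simpa only [Real.norm_eq_abs] using hsum.abs)
            hBsum
          simpa only [Real.norm_eq_abs] using hbd y
  -- the quadratic form as an integral
  set H : Ω → ℝ := fun ω => ∑ i, ∑ j, v i * F i j ω * v j with hHdef
  have hHint_ij : ∀ i j : Fin d, Integrable (fun ω => v i * F i j ω * v j) E.Pi :=
    fun i j => ((hFint i j).const_mul (v i)).mul_const (v j)
  have hHint : Integrable H E.Pi := by
    simp only [hHdef]
    exact integrable_finset_sum _ fun i _ => integrable_finset_sum _ fun j _ => hHint_ij i j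
  have hIH : ∫ ω, H ω ∂E.Pi = 0 := by
    have heq : ∫ ω, H ω ∂E.Pi = ∑ i, ∑ j, v i * covMatrix E i j * v j := by
      simp only [hHdef]
      rw [integral_finset_sum _ (fun i _ => integrable_finset_sum _ fun j _ => hHint_ij i j)]
      refine Finset.sum_congr rfl fun i _ => ?_
      rw [integral_finset_sum _ (fun j _ => hHint_ij i j)]
      refine Finset.sum_congr rfl fun j _ => ?_
      rw [integral_mul_const, integral_const_mul]
      rfl
    rw [heq, hv]
  -- pointwise identity between H and g
  set g : Ω → ℝ := fun ω => ∑' y, E.p 0 y ω * (c y) ^ 2 with hgdef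
  have hptwise : ∀ (ω : Ω) (y : Zd d),
      ∑ i, ∑ j, v i * (E.p 0 y ω * (zdR y i * zdR y j)) * v j
        = E.p 0 y ω * (c y) ^ 2 := by
    intro ω y
    simp only [hcdef]
    rw [sq, Finset.sum_mul_sum, Finset.mul_sum]
    refine Finset.sum_congr rfl fun i _ => ?_
    rw [Finset.mul_sum]
    refine Finset.sum_congr rfl fun j _ => ?_
    ring
  have hHg : H =ᵐ[E.Pi] g := by
    filter_upwards [hA2ae] with ω hω
    have hsum := hsum_ij ω hω
    calc H ω = ∑ i, ∑ j, ∑' y, v i * (E.p 0 y ω * (zdR y i * zdR y j)) * v j := by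
          simp only [hHdef, hFdef]
          refine Finset.sum_congr rfl fun i _ => Finset.sum_congr rfl fun j _ => ?_
          rw [tsum_mul_right, tsum_mul_left]
      _ = ∑ i, ∑' y, ∑ j, v i * (E.p 0 y ω * (zdR y i * zdR y j)) * v j := by
          refine Finset.sum_congr rfl fun i _ => ?_
          exact (Summable.tsum_finsetSum fun j _ => ((hsum i j).mul_left (v i)).mul_right (v j)).symm
      _ = ∑' y, ∑ i, ∑ j, v i * (E.p 0 y ω * (zdR y i * zdR y j)) * v j :=
          (Summable.tsum_finsetSum fun i _ =>
            summable_sum fun j _ => ((hsum i j).mul_left (v i)).mul_right (v j)).symm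
      _ = g ω := by
          simp only [hgdef]
          exact tsum_congr fun y => hptwise ω y
  have hgint : Integrable g E.Pi := hHint.congr hHg
  have hgnn : 0 ≤ᵐ[E.Pi] g :=
    Filter.Eventually.of_forall fun ω =>
      tsum_nonneg fun y => mul_nonneg (E.p_nonneg _ _ _) (sq_nonneg _)
  have hgz : g =ᵐ[E.Pi] 0 := by
    rw [← integral_eq_zero_iff_of_nonneg_ae hgnn hgint]
    rw [← integral_congr_ae hHg]
    exact hIH
  -- each term of g vanishes a.e.
  have hterm : ∀ᵐ ω ∂E.Pi, ∀ y : Zd d, E.p 0 y ω * (c y) ^ 2 = 0 := by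
    filter_upwards [hgz, hA2ae] with ω hgω hω
    have hsumc : Summable (fun y => E.p 0 y ω * (c y) ^ 2) := by
      refine Summable.congr ?_ (fun y => hptwise ω y)
      exact summable_sum fun i _ => summable_sum fun j _ =>
        ((hsum_ij ω hω i j).mul_left (v i)).mul_right (v j)
    intro y
    have h1 : E.p 0 y ω * (c y) ^ 2 ≤ ∑' z, E.p 0 z ω * (c z) ^ 2 :=
      Summable.le_tsum hsumc y fun z _ => mul_nonneg (E.p_nonneg _ _ _) (sq_nonneg _)
    have h2 : 0 ≤ E.p 0 y ω * (c y) ^ 2 := mul_nonneg (E.p_nonneg _ _ _) (sq_nonneg _)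
    have hteq : (∑' z, E.p 0 z ω * (c z) ^ 2) = 0 := by
      have := hgω
      simp only [hgdef, Pi.zero_apply] at this
      exact this
    rw [hteq] at h1
    linarith
  -- translation invariance
  have htrans : ∀ᵐ ω ∂E.Pi, ∀ z w : Zd d, E.p z (w + z) ω * (c w) ^ 2 = 0 := by
    rw [ae_all_iff]
    intro z
    rw [ae_all_iff]
    intro w
    have hmeasf : Measurable fun ω => E.p 0 w ω * (c w) ^ 2 := (E.p_meas 0 w).mul_const _
    have hN : E.Pi {ω | ¬ E.p 0 w ω * (c w) ^ 2 = 0} = 0 := by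
      rw [← ae_iff]
      filter_upwards [hterm] with ω h using h w
    have hNmeas : MeasurableSet {ω | ¬ E.p 0 w ω * (c w) ^ 2 = 0} := by
      have hset : {ω | ¬ E.p 0 w ω * (c w) ^ 2 = 0} =
          ((fun ω => E.p 0 w ω * (c w) ^ 2) ⁻¹' {0})ᶜ := rfl
      rw [hset]
      exact (hmeasf (measurableSet_singleton (0:ℝ))).compl
    have hpre : E.Pi (E.tau z ⁻¹' {ω | ¬ E.p 0 w ω * (c w) ^ 2 = 0}) = 0 := by
      rw [(E.tau_mp z).measure_preimage hNmeas.nullMeasurableSet]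
      exact hN
    have hae2 : ∀ᵐ ω ∂E.Pi, E.p 0 w (E.tau z ω) * (c w) ^ 2 = 0 := by
      rw [ae_iff]
      exact hpre
    filter_upwards [hae2] with ω h
    rwa [E.p_cov 0 w z ω, zero_add] at h
  -- the good set
  have hgood : ∀ᵐ ω ∂E.Pi, ∀ x w : Zd d, 0 < E.p x w ω → c (w - x) = 0 := by
    filter_upwards [htrans] with ω h x w hp
    have h1 := h x (w - x)
    rw [sub_add_cancel] at h1
    rcases mul_eq_zero.1 h1 with h2 | h2
    · exact absurd h2 (ne_of_gt hp)
    · exact sq_eq_zero_iff.1 h2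
  have hex : ∃ ω, ω ∈ transSet E Γ ∧ (∀ x w : Zd d, 0 < E.p x w ω → c (w - x) = 0) := by
    by_contra hco
    have hsub : transSet E Γ ⊆ {ω | ¬ ∀ x w : Zd d, 0 < E.p x w ω → c (w - x) = 0} :=
      fun ω hω hgood' => hco ⟨ω, hω, hgood'⟩
    have h0 : E.Pi {ω | ¬ ∀ x w : Zd d, 0 < E.p x w ω → c (w - x) = 0} = 0 := by
      rw [← ae_iff]
      exact hgood
    have hle := measure_mono (μ := E.Pi) hsub
    rw [h0] at hle
    exact hA4.ne' (le_antisymm hle (zero_le))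
  obtain ⟨ω, hωt, hωg⟩ := hex
  obtain ⟨n, hn1, hnpos⟩ := hωt y0 hy0
  have horth : ∀ x w : Zd d, 0 < E.p x w ω →
      (∑ i, zdR w i * v i) = (∑ i, zdR x i * v i) := by
    intro x w hp
    have h1 := hωg x w hp
    have h2 : c (w - x) = c w - c x := by
      simp only [hcdef]
      rw [← Finset.sum_sub_distrib]
      refine Finset.sum_congr rfl fun i _ => ?_
      have : zdR (w - x) i = zdR w i - zdR x i := by
        simp [zdR]
      rw [this, sub_mul]
    rw [h2] at h1
    have h3 := sub_eq_zero.1 h1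
    simpa only [hcdef] using h3
  have hfin := nstep_orth horth n 0 y0 hnpos
  rw [hfin]
  simp [zdR]
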